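/- Let G be a group, m ≥ 1, and g : Fin m → G such that the range of g generates G and is closed under inverses. Suppose that for every computable function s : ℕ → Fin m there exist natural numbers N₁ < N₂ with ∏_{j=0}^{N₁−1} g(s j) = ∏_{j=0}^{N₂−1} g(s j) (the path of partial products self-intersects). Then every element of G has finite order (G is a Burnside group). -/

import Mathlib

namespace BurnsideAux

variable {G : Type*} [Group G] {m : ℕ}

/-- Product of a word in the generators. -/
def Phi (g : Fin m → G) (w : List (Fin m)) : G := (w.map g).prod

/-- Finite order predicate. -/
def FO (a : G) : Prop := ∃ n : ℕ, 0 < n ∧ a ^ n = 1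

lemma FO_of_pow {a : G} {d : ℕ} (hd : 0 < d) (h : FO (a ^ d)) : FO a := by
  obtain ⟨n, hn, h1⟩ := h
  exact ⟨d * n, Nat.mul_pos hd hn, by rwa [pow_mul]⟩

lemma FO_inv {a : G} (h : FO a⁻¹) : FO a := by
  obtain ⟨n, hn, h1⟩ := h
  exact ⟨n, hn, by rwa [inv_pow, inv_eq_one] at h1⟩

lemma conj_pow_eq (u a : G) (n : ℕ) : (u⁻¹ * a * u) ^ n = u⁻¹ * a ^ n * u := by
  induction n with
  | zero => simp
  | succ k ih =>
    rw [pow_succ, pow_succ, ih]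
    group

lemma FO_conj {a u : G} (h : FO (u⁻¹ * a * u)) : FO a := by
  obtain ⟨n, hn, h1⟩ := h
  refine ⟨n, hn, ?_⟩
  rw [conj_pow_eq] at h1
  have : a ^ n = u * 1 * u⁻¹ := by
    rw [← h1]; group
  simpa using this

lemma Phi_append (g : Fin m → G) (v w : List (Fin m)) :
    Phi g (v ++ w) = Phi g v * Phi g w := by
  simp [Phi]

lemma Phi_singleton (g : Fin m → G) (i : Fin m) : Phi g [i] = g i := by
  simp [Phi]

lemma Phi_take_drop (g : Fin m → G) (w : List (Fin m)) (r : ℕ) :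
    Phi g (w.take r) * Phi g (w.drop r) = Phi g w := by
  rw [← Phi_append, List.take_append_drop]

lemma Phi_drop (g : Fin m → G) (w : List (Fin m)) (r : ℕ) :
    Phi g (w.drop r) = (Phi g (w.take r))⁻¹ * Phi g w := by
  rw [← Phi_take_drop g w r]; group

/-- inverse word -/
def Inv (ι : Fin m → Fin m) (w : List (Fin m)) : List (Fin m) := (w.map ι).reverse

lemma Inv_length (ι : Fin m → Fin m) (w : List (Fin m)) : (Inv ι w).length = w.length := by
  simp [Inv]

lemma Phi_Inv (g : Fin m → G) (ι : Fin m → Fin m) (hι : ∀ i, g (ι i) = (g i)⁻¹)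
    (w : List (Fin m)) : Phi g (Inv ι w) = (Phi g w)⁻¹ := by
  induction w with
  | nil => simp [Inv, Phi]
  | cons i t ih =>
    have h1 : Inv ι (i :: t) = Inv ι t ++ [ι i] := by simp [Inv]
    rw [h1, Phi_append, ih, Phi_singleton, hι]
    have h2 : Phi g (i :: t) = g i * Phi g t := by simp [Phi]
    rw [h2, mul_inv_rev]

lemma Inv_drop (ι : Fin m → Fin m) (v : List (Fin m)) (k : ℕ) :
    (Inv ι v).drop k = Inv ι (v.take (v.length - k)) := by
  simp [Inv, List.drop_reverse, List.map_take]

lemma Phi_Inv_take (g : Fin m → G) (ι : Fin m → Fin m) (hι : ∀ i, g (ι i) = (g i)⁻¹)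
    (v : List (Fin m)) (k : ℕ) :
    Phi g ((Inv ι v).take k) = (Phi g v)⁻¹ * Phi g (v.take (v.length - k)) := by
  have h1 := Phi_take_drop g (Inv ι v) k
  rw [Inv_drop, Phi_Inv g ι hι, Phi_Inv g ι hι] at h1
  have h2 : Phi g ((Inv ι v).take k) = (Phi g v)⁻¹ * ((Phi g (v.take (v.length - k)))⁻¹)⁻¹ := by
    rw [← h1]; group
  simpa using h2

lemma arith {L q₁ q₂ r₁ r₂ N₁ N₂ : ℕ} (h1 : N₁ = q₁*L + r₁) (h2 : N₂ = q₂*L + r₂)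
    (hr₂ : r₂ < L) (hlt : N₁ < N₂) :
    q₁ ≤ q₂ ∧ (0 < q₂ - q₁ ∨ (q₂ - q₁ = 0 ∧ r₁ < r₂)) := by
  rcases Nat.lt_trichotomy q₁ q₂ with h | h | h
  · exact ⟨le_of_lt h, Or.inl (by omega)⟩
  · subst h
    exact ⟨le_refl _, Or.inr ⟨by omega, by omega⟩⟩
  · exfalso
    have h' : Nat.succ q₂ ≤ q₁ := Nat.succ_le_of_lt h
    have hA : Nat.succ q₂ * L ≤ q₁ * L := Nat.mul_le_mul_right L h'
    rw [Nat.succ_mul] at hA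
    omega

/-- From the self-intersection hypothesis applied to the periodic spelling of `w`,
extract a relation between prefix products. -/
lemma rel (g : Fin m → G)
    (hself : ∀ s : ℕ → Fin m, Computable s →
      ∃ N₁ N₂ : ℕ, N₁ < N₂ ∧
        ((List.range N₁).map (fun j => g (s j))).prod =
        ((List.range N₂).map (fun j => g (s j))).prod)
    (w : List (Fin m)) (hw : 0 < w.length) :
    ∃ d r₁ r₂ : ℕ, r₁ < w.length ∧ r₂ < w.length ∧ (0 < d ∨ (d = 0 ∧ r₁ < r₂)) ∧
      Phi g (w.take r₁) = (Phi g w) ^ d * Phi g (w.take r₂) := by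
  set L := w.length with hL
  set i₀ : Fin m := w.get ⟨0, hw⟩ with hi₀
  set s : ℕ → Fin m := fun j => w.getD (j % L) i₀ with hs
  have hcomp : Computable s := by
    apply Primrec.to_comp
    exact (Primrec.list_getD i₀).comp (Primrec.const w)
      (Primrec.nat_mod.comp Primrec.id (Primrec.const L))
  have aux1 : ∀ N, N ≤ L → ((List.range N).map (fun j => g (s j))).prod = Phi g (w.take N) := by
    intro N
    induction N with
    | zero => intro _; simp [Phi]
    | succ k ih =>
      intro hk
      have hkL : k < L := hk
      have h1 : s k = w[k] := by
        simp only [hs]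
        rw [Nat.mod_eq_of_lt hkL, List.getD_eq_getElem w i₀ hkL]
      have h2 : w.take (k+1) = w.take k ++ [w[k]] := by
        rw [List.take_succ, List.getElem?_eq_getElem hkL]
        rfl
      rw [List.range_succ, List.map_append, List.prod_append, ih (le_of_lt hkL), h2,
        Phi_append]
      simp [Phi, h1]
  have aux2 : ∀ M, ((List.range (L + M)).map (fun j => g (s j))).prod
      = Phi g w * ((List.range M).map (fun j => g (s j))).prod := by
    intro M
    rw [List.range_add, List.map_append, List.prod_append]
    congr 1
    · have := aux1 L le_rfl
      rwa [List.take_length] at this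
    · rw [List.map_map]
      have hfe : ((fun j => g (s j)) ∘ fun x => L + x) = fun j => g (s j) := by
        funext j
        simp only [Function.comp_apply, hs, Nat.add_mod_left]
      rw [hfe]
  have aux3 : ∀ q r, r < L → ((List.range (q * L + r)).map (fun j => g (s j))).prod
      = (Phi g w) ^ q * Phi g (w.take r) := by
    intro q
    induction q with
    | zero => intro r hr; simpa using aux1 r (le_of_lt hr)
    | succ k ih =>
      intro r hr
      have harith : (k+1) * L + r = L + (k * L + r) := by ring
      rw [harith, aux2, ih r hr, pow_succ', mul_assoc]
  obtain ⟨N₁, N₂, hlt, heq⟩ := hself s hcomp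
  have e₁ : N₁ = (N₁ / L) * L + N₁ % L := by
    rw [mul_comm]; exact (Nat.div_add_mod N₁ L).symm
  have e₂ : N₂ = (N₂ / L) * L + N₂ % L := by
    rw [mul_comm]; exact (Nat.div_add_mod N₂ L).symm
  have hr₁ : N₁ % L < L := Nat.mod_lt _ hw
  have hr₂ : N₂ % L < L := Nat.mod_lt _ hw
  obtain ⟨hq, hcond⟩ := arith e₁ e₂ hr₂ hlt
  rw [e₁, e₂, aux3 _ _ hr₁, aux3 _ _ hr₂] at heq
  refine ⟨N₂ / L - N₁ / L, N₁ % L, N₂ % L, hr₁, hr₂, hcond, ?_⟩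
  have hpow : (Phi g w) ^ (N₂ / L) = (Phi g w) ^ (N₁ / L) * (Phi g w) ^ (N₂ / L - N₁ / L) := by
    rw [← pow_add]; congr 1; omega
  rw [hpow, mul_assoc] at heq
  exact mul_left_cancel heq

/-- Main case analysis on a relation coming from a self-intersection:
either we directly get finite order (using the induction hypothesis for shorter
words), or we are in the "hole" case `d = 1`, `r₂ < r₁`, `r₁ + r₂ = L`. -/
lemma ana (g : Fin m → G) (ι : Fin m → Fin m) (hι : ∀ i, g (ι i) = (g i)⁻¹)
    (w : List (Fin m)) (hw : 0 < w.length)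
    (IH : ∀ v : List (Fin m), v.length < w.length → FO (Phi g v))
    (d r₁ r₂ : ℕ) (hr₁ : r₁ < w.length) (hr₂ : r₂ < w.length)
    (hcond : 0 < d ∨ (d = 0 ∧ r₁ < r₂))
    (hA : Phi g (w.take r₁) = (Phi g w) ^ d * Phi g (w.take r₂)) :
    FO (Phi g w) ∨ (r₂ < r₁ ∧ r₁ + r₂ = w.length ∧ 0 < r₂ ∧
      Phi g (w.take r₁) = Phi g w * Phi g (w.take r₂)) := by
  set L := w.length with hL
  set a := Phi g w with ha
  have hlt : ∀ r, r ≤ L → (w.take r).length = r := by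
    intro r hr; rw [List.length_take]; omega
  have hld : ∀ r, (w.drop r).length = L - r := by
    intro r; rw [List.length_drop]
  rcases hcond with hd | ⟨hd0, h12⟩
  · rcases Nat.lt_trichotomy (r₁ + r₂) L with hs | hs | hs
    · -- short word for a^d : take r₁ ++ Inv (take r₂)
      left
      refine FO_of_pow hd ?_
      have hv := IH (w.take r₁ ++ Inv ι (w.take r₂)) ?_
      · have h3 : Phi g (w.take r₁ ++ Inv ι (w.take r₂)) = a ^ d := by
          rw [Phi_append, Phi_Inv g ι hι, hA]
          group
        rwa [h3] at hv
      · rw [List.length_append, Inv_length, hlt r₁ hr₁.le, hlt r₂ hr₂.le]; omega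
    · rcases Nat.lt_trichotomy r₁ r₂ with h12 | h12 | h12
      · -- a^(d+1) short
        left
        refine FO_of_pow (Nat.succ_pos d) ?_
        have hv := IH (w.take r₁ ++ w.drop r₂) ?_
        · have h3 : Phi g (w.take r₁ ++ w.drop r₂) = a ^ (d+1) := by
            rw [Phi_append, Phi_drop, hA, pow_succ, ← ha]
            group
          rwa [h3] at hv
        · rw [List.length_append, hlt r₁ hr₁.le, hld r₂]; omega
      · -- r₁ = r₂ : a^d = 1
        left
        subst h12
        refine ⟨d, hd, ?_⟩
        have h2 : a ^ d * Phi g (w.take r₁) = 1 * Phi g (w.take r₁) := by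
          rw [one_mul, ← hA]
        exact mul_right_cancel h2
      · -- r₂ < r₁
        rcases Nat.lt_or_ge 1 d with hd2 | hd1
        · -- d ≥ 2 : a^(d-1) short
          left
          obtain ⟨e, rfl⟩ : ∃ e, d = e + 1 := ⟨d - 1, by omega⟩
          have hdpos : 0 < e := by omega
          refine FO_of_pow hdpos (FO_inv ?_)
          have hv := IH (w.take r₂ ++ w.drop r₁) ?_
          · have h3 : Phi g (w.take r₂ ++ w.drop r₁) = (a ^ e)⁻¹ := by
              rw [Phi_append, Phi_drop, hA, pow_succ, ← ha]
              group
            rwa [h3] at hv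
          · rw [List.length_append, hlt r₂ hr₂.le, hld r₁]; omega
        · -- d = 1 : hole
          have hd1' : d = 1 := by omega
          subst hd1'
          right
          have hr₂pos : 0 < r₂ := by omega
          exact ⟨h12, hs, hr₂pos, by rw [hA, pow_one]⟩
    · -- r₁ + r₂ > L
      left
      refine FO_of_pow hd ?_
      have hv := IH (Inv ι (w.drop r₁) ++ w.drop r₂) ?_
      · have h3 : Phi g (Inv ι (w.drop r₁) ++ w.drop r₂) = a ^ d := by
          rw [Phi_append, Phi_Inv g ι hι, Phi_drop, Phi_drop, hA, ← ha]
          group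
        rwa [h3] at hv
      · rw [List.length_append, Inv_length, hld r₁, hld r₂]; omega
  · -- d = 0
    subst hd0
    left
    rw [pow_zero, one_mul] at hA
    have hv := IH (w.take r₁ ++ w.drop r₂) ?_
    · have h3 : Phi g (w.take r₁ ++ w.drop r₂) = a := by
        rw [Phi_append, Phi_drop, hA, ← ha]
        group
      rwa [h3] at hv
    · rw [List.length_append, hlt r₁ hr₁.le, hld r₂]; omega

/-- Every element represented by a word has finite order. -/
lemma main (g : Fin m → G) (ι : Fin m → Fin m) (hι : ∀ i, g (ι i) = (g i)⁻¹)
    (hself : ∀ s : ℕ → Fin m, Computable s →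
      ∃ N₁ N₂ : ℕ, N₁ < N₂ ∧
        ((List.range N₁).map (fun j => g (s j))).prod =
        ((List.range N₂).map (fun j => g (s j))).prod) :
    ∀ (L : ℕ) (w : List (Fin m)), w.length ≤ L → FO (Phi g w) := by
  intro L
  induction L with
  | zero =>
    intro w hw
    have h0 : w = [] := List.length_eq_zero_iff.mp (Nat.le_zero.mp hw)
    subst h0
    exact ⟨1, one_pos, by simp [Phi]⟩
  | succ n ih =>
    intro w hw
    by_cases hle : w.length ≤ n
    · exact ih w hle
    have hw0 : 0 < w.length := by omega
    have IH : ∀ v : List (Fin m), v.length < w.length → FO (Phi g v) := by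
      intro v hv
      exact ih v (by omega)
    set L' := w.length with hL'
    set a := Phi g w with ha
    -- helper to finish from a short relation
    have finish : ∀ j₁ j₂ : ℕ, j₁ + j₂ < w.length →
        Phi g (w.take j₁) = a * Phi g (w.take j₂) → FO a := by
      intro j₁ j₂ hsum heq
      have hv := IH (w.take j₁ ++ Inv ι (w.take j₂)) ?_
      · have h3 : Phi g (w.take j₁ ++ Inv ι (w.take j₂)) = a := by
          rw [Phi_append, Phi_Inv g ι hι, heq]
          group
        rwa [h3] at hv
      · rw [List.length_append, Inv_length, List.length_take, List.length_take]; omega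
    obtain ⟨d, r₁, r₂, hr₁, hr₂, hcond, hA⟩ := rel g hself w hw0
    rcases ana g ι hι w hw0 IH d r₁ r₂ hr₁ hr₂ hcond hA with h | ⟨h21, hsum, hr2pos, hAh⟩
    · exact h
    -- hole case: build the conjugated word W
    set u := Phi g (w.take r₂) with hu
    set W := Inv ι (w.take r₂) ++ w.take r₁ with hW
    have hlr₂ : (w.take r₂).length = r₂ := by rw [List.length_take]; omega
    have hlr₁ : (w.take r₁).length = r₁ := by rw [List.length_take]; omega
    have hWlen : W.length = w.length := by
      rw [hW, List.length_append, Inv_length, hlr₂, hlr₁]; omega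
    have hWφ : Phi g W = u⁻¹ * a * u := by
      rw [hW, Phi_append, Phi_Inv g ι hι, hAh, mul_assoc]
    have hW0 : 0 < W.length := by omega
    have IHW : ∀ v : List (Fin m), v.length < W.length → FO (Phi g v) := by
      intro v hv
      exact IH v (by omega)
    obtain ⟨δ, ρ₁, ρ₂, hρ₁, hρ₂, hcondW, hAW⟩ := rel g hself W hW0
    rcases ana g ι hι W hW0 IHW δ ρ₁ ρ₂ hρ₁ hρ₂ hcondW hAW with h | ⟨hρ21, hρsum, hρ2pos, hAWh⟩
    · rw [hWφ] at h
      exact FO_conj h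
    -- second hole : compute prefix products of W
    have hAlow : ∀ ρ, ρ ≤ r₂ → Phi g (W.take ρ) = u⁻¹ * Phi g (w.take (r₂ - ρ)) := by
      intro ρ hρ
      have h1 : W.take ρ = (Inv ι (w.take r₂)).take ρ :=
        List.take_append_of_le_length (by rw [Inv_length, hlr₂]; exact hρ)
      rw [h1, Phi_Inv_take g ι hι, hlr₂, List.take_take, inf_eq_left.mpr (Nat.sub_le _ _)]
    have hAhigh : ∀ ρ, r₂ ≤ ρ → ρ ≤ w.length →
        Phi g (W.take ρ) = u⁻¹ * Phi g (w.take (ρ - r₂)) := by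
      intro ρ hρge hρle
      have hρeq : ρ = (Inv ι (w.take r₂)).length + (ρ - r₂) := by
        rw [Inv_length, hlr₂]; omega
      rw [hW]
      rw [show (Inv ι (w.take r₂) ++ w.take r₁).take ρ
          = (Inv ι (w.take r₂) ++ w.take r₁).take ((Inv ι (w.take r₂)).length + (ρ - r₂)) by
        rw [← hρeq]]
      rw [List.take_length_add_append, Phi_append, Phi_Inv g ι hι, List.take_take,
        inf_eq_left.mpr (by omega : ρ - r₂ ≤ r₁)]
    have hρsum' : ρ₁ + ρ₂ = w.length := by omega
    have hρ₁L : ρ₁ < w.length := by omega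
    rcases le_total ρ₂ r₂ with hc | hc
    · have hρ₁ge : r₂ ≤ ρ₁ := by omega
      rw [hAhigh ρ₁ hρ₁ge (le_of_lt hρ₁L), hAlow ρ₂ hc, hWφ] at hAWh
      have h2 : u⁻¹ * Phi g (w.take (ρ₁ - r₂)) = u⁻¹ * (a * Phi g (w.take (r₂ - ρ₂))) := by
        rw [hAWh]; group
      exact finish (ρ₁ - r₂) (r₂ - ρ₂) (by omega) (mul_left_cancel h2)
    · have hρ₂le : ρ₂ ≤ w.length := by omega
      have hρ₁ge : r₂ ≤ ρ₁ := by omega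
      rw [hAhigh ρ₁ hρ₁ge (le_of_lt hρ₁L), hAhigh ρ₂ hc hρ₂le, hWφ] at hAWh
      have h2 : u⁻¹ * Phi g (w.take (ρ₁ - r₂)) = u⁻¹ * (a * Phi g (w.take (ρ₂ - r₂))) := by
        rw [hAWh]; group
      exact finish (ρ₁ - r₂) (ρ₂ - r₂) (by omega) (mul_left_cancel h2)

end BurnsideAux

/-- If every computable sequence of generators of `G` traces out a self-intersecting
path of partial products, then every element of `G` has finite order
(an inescapable group is a Burnside group). -/
theorem burnside_of_inescapable {G : Type*} [Group G] (m : ℕ) (hm : 1 ≤ m)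
    (g : Fin m → G) (hgen : Subgroup.closure (Set.range g) = ⊤)
    (hinv : ∀ i : Fin m, ∃ i' : Fin m, g i' = (g i)⁻¹)
    (hself : ∀ s : ℕ → Fin m, Computable s →
      ∃ N₁ N₂ : ℕ, N₁ < N₂ ∧
        ((List.range N₁).map (fun j => g (s j))).prod =
        ((List.range N₂).map (fun j => g (s j))).prod) :
    ∀ a : G, ∃ k : ℤ, 1 ≤ k ∧ a ^ k = 1 := by
  classical
  obtain ⟨ι, hι⟩ : ∃ ι : Fin m → Fin m, ∀ i, g (ι i) = (g i)⁻¹ :=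
    ⟨fun i => (hinv i).choose, fun i => (hinv i).choose_spec⟩
  -- every element is represented by a word
  have hword : ∀ a : G, ∃ w : List (Fin m), BurnsideAux.Phi g w = a := by
    intro a
    let S : Subgroup G :=
      { carrier := {x | ∃ w : List (Fin m), BurnsideAux.Phi g w = x}
        one_mem' := ⟨[], rfl⟩
        mul_mem' := by
          rintro x y ⟨v, hv⟩ ⟨w, hw⟩
          exact ⟨v ++ w, by rw [BurnsideAux.Phi_append, hv, hw]⟩
        inv_mem' := by
          rintro x ⟨v, hv⟩
          exact ⟨BurnsideAux.Inv ι v, by rw [BurnsideAux.Phi_Inv g ι hι, hv]⟩ }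
    have hle : Subgroup.closure (Set.range g) ≤ S := by
      rw [Subgroup.closure_le]
      rintro x ⟨i, rfl⟩
      exact ⟨[i], BurnsideAux.Phi_singleton g i⟩
    have : a ∈ S := by
      have : a ∈ Subgroup.closure (Set.range g) := by rw [hgen]; trivial
      exact hle this
    exact this
  intro a
  obtain ⟨w, hw⟩ := hword a
  have hFO : BurnsideAux.FO (BurnsideAux.Phi g w) :=
    BurnsideAux.main g ι hι hself w.length w le_rfl
  rw [hw] at hFO
  obtain ⟨n, hn, h1⟩ := hFO
  refine ⟨(n : ℤ), by exact_mod_cast hn, ?_⟩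
  rw [zpow_natCast]
  exact h1
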